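/- arXiv:2505.07297 — 4 statements merged into one kernel-verified Lean document; each statement's English description precedes it below -/
import Mathlib

section
/- Let τ be a regular cardinal, let I be a set of cardinality < τ, and let (C_i)_{i∈I} be a family of locally small categories. An object X = (X_i)_{i∈I} of the product category ∏_{i∈I} C_i is τ-presentable if and only if X_i is a τ-presentable object of C_i for every i ∈ I. -/
universe w v u u'

open CategoryTheory Limits Opposite

/-- A small category `J` is `κ`-filtered if every diagram in it indexed by a category with
fewer than `κ` objects and fewer than `κ` arrows admits a cocone. -/
def IsCardFiltered (J : Type w) [SmallCategory J] (κ : Cardinal.{w}) : Prop :=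
  ∀ (A : Type w) [SmallCategory A], ∀ (F : A ⥤ J),
    Cardinal.mk A < κ → Cardinal.mk (Arrow A) < κ → Nonempty (Limits.Cocone F)

/-- An object `X` of a locally small category `C` is `κ`-presentable if the functor
`Hom(X, -) : C ⥤ Type` preserves colimits of (small) `κ`-filtered diagrams. -/
def IsCardPresentable {C : Type u} [Category.{v} C] (κ : Cardinal.{v}) (X : C) : Prop :=
  ∀ (J : Type v) [SmallCategory J], IsCardFiltered J κ →
    PreservesColimitsOfShape J (coyoneda.obj (op X))


def arrowEquivSigma (A : Type w) [Category.{v} A] : Arrow A ≃ Σ p : A × A, p.1 ⟶ p.2 where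
  toFun f := ⟨(f.left, f.right), f.hom⟩
  invFun x := Arrow.mk x.2
  left_inv _ := rfl
  right_inv _ := rfl

lemma mk_arrow_le (A : Type w) [SmallCategory A] [∀ a b : A, Subsingleton (a ⟶ b)] :
    Cardinal.mk (Arrow A) ≤ Cardinal.mk A * Cardinal.mk A := by
  rw [Cardinal.mk_congr (arrowEquivSigma A)]
  have : Cardinal.mk (A × A) = Cardinal.mk A * Cardinal.mk A := by simp [Cardinal.mk_prod]
  rw [← this]
  exact Cardinal.mk_le_of_injective (f := fun x => x.1)
    (fun x y h => by
      obtain ⟨p, f⟩ := x; obtain ⟨q, g⟩ := y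
      cases h
      exact congrArg _ (Subsingleton.elim f g))

lemma mk_arrow_lt_aleph0 (A : Type w) [SmallCategory A] [Finite A]
    [∀ a b : A, Finite (a ⟶ b)] : Cardinal.mk (Arrow A) < Cardinal.aleph0 := by
  rw [Cardinal.mk_congr (arrowEquivSigma A)]
  exact Cardinal.lt_aleph0_iff_finite.2 inferInstance

lemma mk_arrow_lt {τ : Cardinal.{w}} (hτ : τ.IsRegular) (A : Type w) [SmallCategory A]
    [∀ a b : A, Subsingleton (a ⟶ b)] (hA : Cardinal.mk A < τ) :
    Cardinal.mk (Arrow A) < τ :=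
  lt_of_le_of_lt (mk_arrow_le A) (Cardinal.mul_lt_of_lt hτ.aleph0_le hA hA)

lemma isFiltered_of_isCardFiltered {J : Type v} [SmallCategory J] {τ : Cardinal.{v}}
    (hτ : τ.IsRegular) (hJ : IsCardFiltered J τ) : IsFiltered J := by
  have hgen : ∀ (A : Type v) [SmallCategory A] (F : A ⥤ J), Finite A →
      (∀ a b : A, Finite (a ⟶ b)) → Nonempty (Cocone F) := by
    intro A _ F hA hhom
    have h1 : Cardinal.mk A < τ :=
      lt_of_lt_of_le (Cardinal.lt_aleph0_iff_finite.2 hA) hτ.aleph0_le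
    have h2 : Cardinal.mk (Arrow A) < τ := by
      have := hA
      have := hhom
      exact lt_of_lt_of_le (mk_arrow_lt_aleph0 A) hτ.aleph0_le
    exact hJ A F h1 h2
  have hne : Nonempty J := by
    obtain ⟨c⟩ := hgen (Discrete PEmpty.{v+1}) (Functor.empty J)
      inferInstance (fun a b => inferInstance)
    exact ⟨c.pt⟩
  have h1 : IsFilteredOrEmpty J := by
    constructor
    · intro j j'
      obtain ⟨c⟩ := hgen (Discrete (ULift.{v} Bool))
        (Discrete.functor (fun b => bif b.down then j else j')) inferInstance
        (fun a b => inferInstance)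
      exact ⟨c.pt, c.ι.app ⟨ULift.up true⟩, c.ι.app ⟨ULift.up false⟩, trivial⟩
    · intro j j' f g
      haveI : Finite (AsSmall.{v} WalkingParallelPair) := by unfold AsSmall; infer_instance
      haveI : ∀ a b : AsSmall.{v} WalkingParallelPair, Finite (a ⟶ b) := fun a b => by
        show Finite (ULift _); infer_instance
      obtain ⟨c⟩ := hgen (AsSmall.{v} WalkingParallelPair)
        (AsSmall.down ⋙ parallelPair f g) inferInstance inferInstance
      refine ⟨c.pt, c.ι.app (AsSmall.up.obj WalkingParallelPair.one), ?_⟩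
      have hl := c.ι.naturality (AsSmall.up.map WalkingParallelPairHom.left)
      have hr := c.ι.naturality (AsSmall.up.map WalkingParallelPairHom.right)
      simp at hl hr
      exact hl.trans hr.symm
  exact { toIsFilteredOrEmpty := h1, nonempty := hne }

section ConstCocone
variable {D : Type u} [Category.{v} D] (J : Type w) [SmallCategory J]

/-- The constant cocone on `Y`. -/
@[simps]
def constCocone (Y : D) : Cocone ((Functor.const J).obj Y) where
  pt := Y
  ι := 𝟙 _

noncomputable def isColimitConstCocone [IsFiltered J] (Y : D) :
    IsColimit (_root_.constCocone J Y) := by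
  haveI : IsConnected J := IsFiltered.isConnected J
  haveI : Nonempty J := IsConnected.is_nonempty
  refine
    { desc := fun s => s.ι.app (Classical.arbitrary J)
      fac := fun s j => ?_
      uniq := fun s m hm => ?_ }
  · have hconst : ∀ j j' : J, s.ι.app j = s.ι.app j' := by
      apply constant_of_preserves_morphisms (α := (Y ⟶ s.pt)) (fun j => s.ι.app j)
      intro j j' f
      have := s.ι.naturality f
      simpa using this.symm
    simp [hconst (Classical.arbitrary J) j]
    exact Category.id_comp _
  · have := hm (Classical.arbitrary J)
    exact (Category.id_comp m).symm.trans this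
end ConstCocone

section CoconeEq
variable {J : Type w} [SmallCategory J] {D : Type u} [Category.{v} D]

def coconeOfEq {G₁ G₂ : J ⥤ D} (h : G₁ = G₂) (c : Cocone G₂) : Cocone G₁ := h ▸ c

lemma coconeOfEq_pt {G₁ G₂ : J ⥤ D} (h : G₁ = G₂) (c : Cocone G₂) :
    (coconeOfEq h c).pt = c.pt := by subst h; rfl

lemma coconeOfEq_ι_app {G₁ G₂ : J ⥤ D} (h : G₁ = G₂) (c : Cocone G₂) (j : J) :
    (coconeOfEq h c).ι.app j =
      eqToHom (by rw [h]) ≫ c.ι.app j ≫ eqToHom (coconeOfEq_pt h c).symm := by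
  subst h; simp [coconeOfEq]

noncomputable def isColimitCoconeOfEq {G₁ G₂ : J ⥤ D} (h : G₁ = G₂) {c : Cocone G₂}
    (hc : IsColimit c) : IsColimit (coconeOfEq h c) := by subst h; exact hc

lemma cocone_eq_app {G : J ⥤ D} {c₁ c₂ : Cocone G} (h : c₁ = c₂) (j : J) :
    c₁.ι.app j ≫ eqToHom (congrArg Cocone.pt h) = c₂.ι.app j := by subst h; simp
end CoconeEq

section EvalColimit
variable {I : Type v} {C : I → Type u} [∀ i, Category.{v} (C i)]
  {J : Type v} [SmallCategory J] {F : J ⥤ ∀ i, C i}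

open Classical in
/-- The family of cocones obtained by replacing the `i`-th component cocone by `s`. -/
noncomputable def updFamily (c : Cocone F) (i : I) (s : Cocone (F ⋙ Pi.eval C i)) :
    ∀ k, Cocone (F ⋙ Pi.eval C k) :=
  Function.update (fun k => pi.coconeCompEval c k) i s

lemma updFamily_same (c : Cocone F) (i : I) (s : Cocone (F ⋙ Pi.eval C i)) :
    updFamily c i s i = s := by
  classical
  simp [updFamily]

lemma updFamily_ne (c : Cocone F) (i : I) (s : Cocone (F ⋙ Pi.eval C i)) {k : I}
    (h : k ≠ i) : updFamily c i s k = pi.coconeCompEval c k := by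
  classical
  simp [updFamily, Function.update_of_ne h]

open Classical in
/-- Extend a morphism out of one component to the product. -/
noncomputable def extHom (c : Cocone F) (i : I) (s : Cocone (F ⋙ Pi.eval C i))
    (u : c.pt i ⟶ s.pt) :
    c.pt ⟶ (pi.coconeOfCoconeCompEval (updFamily c i s)).pt := fun k =>
  if h : k = i then
    (by subst h; exact u ≫ eqToHom (congrArg Cocone.pt (updFamily_same c k s)).symm)
  else eqToHom (congrArg Cocone.pt (updFamily_ne c i s h)).symm

lemma extHom_same (c : Cocone F) (i : I) (s : Cocone (F ⋙ Pi.eval C i))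
    (u : c.pt i ⟶ s.pt) :
    extHom c i s u i = u ≫ eqToHom (congrArg Cocone.pt (updFamily_same c i s)).symm := by
  simp [extHom]
  rfl

lemma extHom_ne (c : Cocone F) (i : I) (s : Cocone (F ⋙ Pi.eval C i))
    (u : c.pt i ⟶ s.pt) {k : I} (h : k ≠ i) :
    extHom c i s u k = eqToHom (congrArg Cocone.pt (updFamily_ne c i s h)).symm := by
  simp only [extHom]
  rw [dif_neg h]
  rfl

/-- Evaluation of a colimit cocone in a product category is a colimit cocone. -/
noncomputable def evalIsColimit {c : Cocone F} (hc : IsColimit c) (i : I) :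
    IsColimit (pi.coconeCompEval c i) where
  desc s := (hc.desc (pi.coconeOfCoconeCompEval (updFamily c i s))) i ≫
      eqToHom (congrArg Cocone.pt (updFamily_same c i s))
  fac s j := by
    have h1 := congrFun (hc.fac (pi.coconeOfCoconeCompEval (updFamily c i s)) j) i
    have h1' : c.ι.app j i ≫ (hc.desc (pi.coconeOfCoconeCompEval (updFamily c i s))) i =
        (updFamily c i s i).ι.app j := h1
    show c.ι.app j i ≫ _ = s.ι.app j
    erw [← Category.assoc, h1', cocone_eq_app (updFamily_same c i s) j]
  uniq s m hm := by
    have key : extHom c i s m = hc.desc (pi.coconeOfCoconeCompEval (updFamily c i s)) := by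
      apply hc.uniq
      intro j
      funext k
      show c.ι.app j k ≫ extHom c i s m k = (updFamily c i s k).ι.app j
      by_cases h : k = i
      · subst h
        erw [extHom_same, ← Category.assoc]
        have hm' : c.ι.app j k ≫ m = s.ι.app j := hm j
        rw [hm']
        exact cocone_eq_app (updFamily_same c k s).symm j
      · rw [extHom_ne c i s m h]
        exact cocone_eq_app (updFamily_ne c i s h).symm j
    have h2 := congrFun key i
    erw [extHom_same] at h2
    show m = _ ≫ _
    rw [← h2]
    erw [Category.assoc, eqToHom_trans, eqToHom_refl, Category.comp_id]
end EvalColimit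

section Fwd
variable {I : Type v} {C : I → Type u} [∀ i, Category.{v} (C i)] (X : ∀ i, C i)
  {J : Type v} [SmallCategory J]

open Classical in
/-- The family of functors which is `F` at `i` and constant elsewhere. -/
noncomputable def fwdFam (i : I) (F : J ⥤ C i) : ∀ k, J ⥤ C k :=
  Function.update (fun k => (Functor.const J).obj (X k)) i F

lemma fwdFam_same (i : I) (F : J ⥤ C i) : fwdFam X i F i = F := by
  classical simp [fwdFam]

lemma fwdFam_ne (i : I) (F : J ⥤ C i) {k : I} (h : k ≠ i) :
    fwdFam X i F k = (Functor.const J).obj (X k) := by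
  classical simp [fwdFam, Function.update_of_ne h]

/-- The associated functor to the product category. -/
noncomputable abbrev fwdG (i : I) (F : J ⥤ C i) : J ⥤ ∀ k, C k :=
  Functor.pi' (fwdFam X i F)

lemma fwdG_eval (i : I) (F : J ⥤ C i) (k : I) :
    fwdG X i F ⋙ Pi.eval C k = fwdFam X i F k := Functor.pi'_eval _ _

lemma fwdG_obj_same (i : I) (F : J ⥤ C i) (j : J) : (fwdG X i F).obj j i = F.obj j :=
  Functor.congr_obj ((fwdG_eval X i F i).trans (fwdFam_same X i F)) j

lemma fwdG_obj_ne (i : I) (F : J ⥤ C i) {k : I} (h : k ≠ i) (j : J) :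
    (fwdG X i F).obj j k = X k :=
  Functor.congr_obj ((fwdG_eval X i F k).trans (fwdFam_ne X i F h)) j

lemma fwdG_map_same (i : I) (F : J ⥤ C i) {j j' : J} (u : j ⟶ j') :
    ((fwdG X i F).map u) i =
      eqToHom (fwdG_obj_same X i F j) ≫ F.map u ≫ eqToHom (fwdG_obj_same X i F j').symm :=
  Functor.congr_hom ((fwdG_eval X i F i).trans (fwdFam_same X i F)) u

lemma fwdG_map_ne (i : I) (F : J ⥤ C i) {k : I} (h : k ≠ i) {j j' : J} (u : j ⟶ j') :
    ((fwdG X i F).map u) k =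
      eqToHom ((fwdG_obj_ne X i F h j).trans (fwdG_obj_ne X i F h j').symm) := by
  have h2 := Functor.congr_hom ((fwdG_eval X i F k).trans (fwdFam_ne X i F h)) u
  have h3 : ((fwdG X i F).map u) k =
      eqToHom (fwdG_obj_ne X i F h j) ≫ 𝟙 (X k) ≫ eqToHom (fwdG_obj_ne X i F h j').symm := h2
  rw [h3]; simp

open Classical in
/-- The family of cocones which is `c` at `i` and constant elsewhere. -/
noncomputable def fwdCocones (i : I) {F : J ⥤ C i} (c : Cocone F) :
    ∀ k, Cocone (fwdG X i F ⋙ Pi.eval C k) := fun k =>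
  if h : k = i then
    (by subst h; exact coconeOfEq ((fwdG_eval X _ F _).trans (fwdFam_same X _ F)) c)
  else coconeOfEq ((fwdG_eval X i F k).trans (fwdFam_ne X i F h)) (_root_.constCocone J (X k))

lemma fwdCocones_same (i : I) {F : J ⥤ C i} (c : Cocone F) :
    fwdCocones X i c i = coconeOfEq ((fwdG_eval X i F i).trans (fwdFam_same X i F)) c := by
  simp [fwdCocones]

lemma fwdCocones_ne (i : I) {F : J ⥤ C i} (c : Cocone F) {k : I} (h : k ≠ i) :
    fwdCocones X i c k =
      coconeOfEq ((fwdG_eval X i F k).trans (fwdFam_ne X i F h)) (_root_.constCocone J (X k)) := by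
  simp [fwdCocones, h]

/-- The big cocone over the product. -/
noncomputable def fwdB (i : I) {F : J ⥤ C i} (c : Cocone F) : Cocone (fwdG X i F) :=
  pi.coconeOfCoconeCompEval (fwdCocones X i c)

lemma fwdB_pt_same (i : I) {F : J ⥤ C i} (c : Cocone F) : (fwdB X i c).pt i = c.pt := by
  show (fwdCocones X i c i).pt = c.pt
  rw [fwdCocones_same, coconeOfEq_pt]

lemma fwdB_pt_ne (i : I) {F : J ⥤ C i} (c : Cocone F) {k : I} (h : k ≠ i) :
    (fwdB X i c).pt k = X k := by
  show (fwdCocones X i c k).pt = X k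
  rw [fwdCocones_ne X i c h, coconeOfEq_pt]
  rfl

lemma fwdB_app_same (i : I) {F : J ⥤ C i} (c : Cocone F) (j : J) :
    (fwdB X i c).ι.app j i =
      eqToHom (fwdG_obj_same X i F j) ≫ c.ι.app j ≫ eqToHom (fwdB_pt_same X i c).symm := by
  show (fwdCocones X i c i).ι.app j = _
  have h := fwdCocones_same (F := F) X i c
  have h2 := cocone_eq_app h j
  rw [coconeOfEq_ι_app] at h2
  have h3 := congrArg (fun z => z ≫ eqToHom (congrArg Cocone.pt h).symm) h2
  simp only [Category.assoc, eqToHom_trans, eqToHom_refl, Category.comp_id] at h3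
  exact h3

lemma fwdB_app_ne (i : I) {F : J ⥤ C i} (c : Cocone F) {k : I} (h : k ≠ i) (j : J) :
    (fwdB X i c).ι.app j k =
      eqToHom ((fwdG_obj_ne X i F h j).trans (fwdB_pt_ne X i c h).symm) := by
  show (fwdCocones X i c k).ι.app j = _
  have hcc := fwdCocones_ne (F := F) X i c h
  have h2 := cocone_eq_app hcc j
  rw [coconeOfEq_ι_app] at h2
  have h3 := congrArg (fun z => z ≫ eqToHom (congrArg Cocone.pt hcc).symm) h2
  simp only [Category.assoc, eqToHom_trans, eqToHom_refl, Category.comp_id,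
    _root_.constCocone] at h3
  erw [eqToHom_trans, eqToHom_trans] at h3
  simp at h3
  erw [eqToHom_trans] at h3
  exact h3

lemma fwdCocones_isColimit [IsFiltered J] (i : I) {F : J ⥤ C i} {c : Cocone F}
    (hc : IsColimit c) (k : I) : Nonempty (IsColimit (fwdCocones X i c k)) := by
  by_cases h : k = i
  · subst h
    rw [fwdCocones_same]
    exact ⟨isColimitCoconeOfEq _ hc⟩
  · rw [fwdCocones_ne X i c h]
    exact ⟨isColimitCoconeOfEq _ (isColimitConstCocone J (X k))⟩

lemma fwdB_isColimit [IsFiltered J] (i : I) {F : J ⥤ C i} {c : Cocone F}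
    (hc : IsColimit c) : Nonempty (IsColimit (fwdB X i c)) :=
  ⟨pi.coconeOfCoconeEvalIsColimit (fun k => (fwdCocones_isColimit X i hc k).some)⟩

open Classical in
/-- Extending a morphism from `X i` to a tuple morphism. -/
noncomputable def tupleExt {P : ∀ k, C k} (i : I) (u : X i ⟶ P i)
    (hne : ∀ k, k ≠ i → X k = P k) : ∀ k, X k ⟶ P k := fun k =>
  if h : k = i then (by subst h; exact u) else eqToHom (hne k h)

lemma tupleExt_same {P : ∀ k, C k} (i : I) (u : X i ⟶ P i)
    (hne : ∀ k, k ≠ i → X k = P k) : tupleExt X i u hne i = u := by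
  simp [tupleExt]

lemma tupleExt_ne {P : ∀ k, C k} (i : I) (u : X i ⟶ P i)
    (hne : ∀ k, k ≠ i → X k = P k) {k : I} (h : k ≠ i) :
    tupleExt X i u hne k = eqToHom (hne k h) := by
  simp [tupleExt, h]

end Fwd


section Main
variable (τ : Cardinal.{v}) (hτ : τ.IsRegular) {I : Type v}
  (hI : Cardinal.mk I < τ) {C : I → Type u} [∀ i, Category.{v} (C i)] (X : ∀ i, C i)

theorem backward (hτ : τ.IsRegular) (hI : Cardinal.mk I < τ)
    (hX : ∀ i, IsCardPresentable τ (X i)) : IsCardPresentable τ X := by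
  intro J _ hJ
  haveI hfil : IsFiltered J := isFiltered_of_isCardFiltered hτ hJ
  haveI : ∀ k, PreservesColimitsOfShape J (coyoneda.obj (op (X k))) := fun k => hX k J hJ
  constructor
  intro F
  constructor
  intro c hc
  constructor
  have hk : ∀ k, IsColimit ((coyoneda.obj (op (X k))).mapCocone (pi.coconeCompEval c k)) :=
    fun k => isColimitOfPreserves _ (evalIsColimit hc k)
  apply Types.FilteredColimit.isColimitOf
  · -- joint surjectivity
    intro g
    have h1 : ∀ k, ∃ (j : J) (y : X k ⟶ (F.obj j) k), y ≫ c.ι.app j k = g k := by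
      intro k
      obtain ⟨j, y, hy⟩ := Types.jointly_surjective _ (hk k) (g k)
      exact ⟨j, y, hy⟩
    choose jf yf hyf using h1
    have hcard1 : Cardinal.mk (Discrete I) < τ := by
      rw [Cardinal.mk_congr discreteEquiv]; exact hI
    obtain ⟨cn⟩ := hJ (Discrete I) (Discrete.functor jf) hcard1 (mk_arrow_lt hτ _ hcard1)
    refine ⟨cn.pt, fun k => yf k ≫ (F.map (cn.ι.app ⟨k⟩)) k, ?_⟩
    funext k
    show g k = (yf k ≫ (F.map (cn.ι.app ⟨k⟩)) k) ≫ c.ι.app cn.pt k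
    rw [Category.assoc]
    have hw : (F.map (cn.ι.app ⟨k⟩)) k ≫ c.ι.app cn.pt k = c.ι.app (jf k) k :=
      congrFun (c.w (cn.ι.app ⟨k⟩)) k
    rw [hw, hyf]
  · -- equality at some stage
    intro j j' f f' hee
    have hee' : ∀ k, f k ≫ c.ι.app j k = f' k ≫ c.ι.app j' k := fun k => congrFun hee k
    obtain ⟨m0, a, b⟩ : ∃ (m0 : J) (_ : j ⟶ m0), Nonempty (j' ⟶ m0) :=
      ⟨IsFiltered.max j j', IsFiltered.leftToMax j j', ⟨IsFiltered.rightToMax j j'⟩⟩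
    obtain ⟨b⟩ := b
    have h2 : ∀ k, ∃ (n : J) (s : m0 ⟶ n),
        f k ≫ (F.map (a ≫ s)) k = f' k ≫ (F.map (b ≫ s)) k := by
      intro k
      have comp : ∀ {p q r : J} (x : p ⟶ q) (y : q ⟶ r),
          (F.map (x ≫ y)) k = (F.map x) k ≫ (F.map y) k :=
        fun x y => congrFun (F.map_comp x y) k
      have heq : ((coyoneda.obj (op (X k))).mapCocone (pi.coconeCompEval c k)).ι.app j (f k) =
          ((coyoneda.obj (op (X k))).mapCocone (pi.coconeCompEval c k)).ι.app j' (f' k) :=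
        hee' k
      obtain ⟨l, u, v, huv⟩ := (Types.FilteredColimit.isColimit_eq_iff _ (hk k)).1 heq
      have huv' : f k ≫ (F.map u) k = f' k ≫ (F.map v) k := huv
      let w := IsFiltered.max m0 l
      let α : m0 ⟶ w := IsFiltered.leftToMax m0 l
      let β : l ⟶ w := IsFiltered.rightToMax m0 l
      let q1 := IsFiltered.coeqHom (a ≫ α) (u ≫ β)
      have hq1 := IsFiltered.coeq_condition (a ≫ α) (u ≫ β)
      let q2 := IsFiltered.coeqHom (b ≫ α ≫ q1) (v ≫ β ≫ q1)
      have hq2 := IsFiltered.coeq_condition (b ≫ α ≫ q1) (v ≫ β ≫ q1)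
      refine ⟨_, α ≫ q1 ≫ q2, ?_⟩
      have hJ1 : a ≫ α ≫ q1 ≫ q2 = u ≫ β ≫ q1 ≫ q2 := by
        simp only [← Category.assoc]
        rw [hq1]
      have hJ2 : b ≫ α ≫ q1 ≫ q2 = v ≫ β ≫ q1 ≫ q2 := by
        simp only [← Category.assoc] at hq2 ⊢
        rw [hq2]
      calc f k ≫ (F.map (a ≫ α ≫ q1 ≫ q2)) k
          = f k ≫ (F.map (u ≫ β ≫ q1 ≫ q2)) k := by rw [hJ1]
        _ = (f k ≫ (F.map u) k) ≫ (F.map (β ≫ q1 ≫ q2)) k := by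
            rw [comp u (β ≫ q1 ≫ q2)]
            exact (Category.assoc _ _ _).symm
        _ = (f' k ≫ (F.map v) k) ≫ (F.map (β ≫ q1 ≫ q2)) k := by rw [huv']
        _ = f' k ≫ (F.map (v ≫ β ≫ q1 ≫ q2)) k := by
            rw [comp v (β ≫ q1 ≫ q2)]
            exact Category.assoc _ _ _
        _ = f' k ≫ (F.map (b ≫ α ≫ q1 ≫ q2)) k := by rw [hJ2]
    choose nf sf hsf using h2
    have hcard1 : Cardinal.mk (WidePushoutShape I) < τ := by
      have : Cardinal.mk (WidePushoutShape I) = Cardinal.mk I + 1 := Cardinal.mk_option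
      rw [this]
      exact Cardinal.add_lt_of_lt hτ.aleph0_le hI
        (lt_of_lt_of_le Cardinal.one_lt_aleph0 hτ.aleph0_le)
    obtain ⟨cw⟩ := hJ (WidePushoutShape I) (WidePushoutShape.wideSpan m0 nf sf) hcard1
      (mk_arrow_lt hτ _ hcard1)
    have hwk : ∀ k, sf k ≫ cw.ι.app (some k) = cw.ι.app none := by
      intro k
      have := cw.w (WidePushoutShape.Hom.init k)
      exact this
    refine ⟨cw.pt, a ≫ cw.ι.app none, b ≫ cw.ι.app none, ?_⟩
    funext k
    show f k ≫ (F.map (a ≫ cw.ι.app none)) k = f' k ≫ (F.map (b ≫ cw.ι.app none)) k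
    have comp : ∀ {p q r : J} (x : p ⟶ q) (y : q ⟶ r),
        (F.map (x ≫ y)) k = (F.map x) k ≫ (F.map y) k :=
      fun x y => congrFun (F.map_comp x y) k
    calc f k ≫ (F.map (a ≫ cw.ι.app none)) k
        = f k ≫ (F.map (a ≫ sf k ≫ cw.ι.app (some k))) k := by rw [hwk]
      _ = (f k ≫ (F.map (a ≫ sf k)) k) ≫ (F.map (cw.ι.app (some k))) k := by
          rw [show a ≫ sf k ≫ cw.ι.app (some k) = (a ≫ sf k) ≫ cw.ι.app (some k) from
            (Category.assoc _ _ _).symm, comp (a ≫ sf k) (cw.ι.app (some k))]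
          exact (Category.assoc _ _ _).symm
      _ = (f' k ≫ (F.map (b ≫ sf k)) k) ≫ (F.map (cw.ι.app (some k))) k := by rw [hsf]
      _ = f' k ≫ (F.map (b ≫ sf k ≫ cw.ι.app (some k))) k := by
          rw [show b ≫ sf k ≫ cw.ι.app (some k) = (b ≫ sf k) ≫ cw.ι.app (some k) from
            (Category.assoc _ _ _).symm, comp (b ≫ sf k) (cw.ι.app (some k))]
          exact Category.assoc _ _ _
      _ = f' k ≫ (F.map (b ≫ cw.ι.app none)) k := by rw [hwk]
end Main

section MainFwd
variable (τ : Cardinal.{v}) {I : Type v}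
  {C : I → Type u} [∀ i, Category.{v} (C i)] (X : ∀ i, C i)

theorem forward (hτ : τ.IsRegular) (hX : IsCardPresentable τ X) (i : I) :
    IsCardPresentable τ (X i) := by
  intro J _ hJ
  haveI hfil : IsFiltered J := isFiltered_of_isCardFiltered hτ hJ
  haveI hXJ : PreservesColimitsOfShape J (coyoneda.obj (op X)) := hX J hJ
  constructor
  intro F
  constructor
  intro c hc
  obtain ⟨hB⟩ := fwdB_isColimit X i hc
  constructor
  have hmapped : IsColimit ((coyoneda.obj (op X)).mapCocone (fwdB X i c)) :=
    isColimitOfPreserves _ hB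
  apply Types.FilteredColimit.isColimitOf
  · -- surjectivity
    intro g
    obtain ⟨j, y, hy⟩ := Types.jointly_surjective _ hmapped
      (tupleExt X i (g ≫ eqToHom (fwdB_pt_same X i c).symm)
        (fun k h => (fwdB_pt_ne X i c h).symm))
    refine ⟨j, y i ≫ eqToHom (fwdG_obj_same X i F j), ?_⟩
    have h5 : y i ≫ (fwdB X i c).ι.app j i =
        tupleExt X i (g ≫ eqToHom (fwdB_pt_same X i c).symm)
          (fun k h => (fwdB_pt_ne X i c h).symm) i := congrFun hy i
    rw [tupleExt_same, fwdB_app_same] at h5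
    have h6 := congrArg (fun z => z ≫ eqToHom (fwdB_pt_same X i c)) h5
    simp only [Category.assoc, eqToHom_trans, eqToHom_refl, Category.comp_id] at h6
    show g = (y i ≫ eqToHom (fwdG_obj_same X i F j)) ≫ c.ι.app j
    rw [← h6]
    simp
  · -- equality at some stage
    intro j j' f f' hee
    have hee' : f ≫ c.ι.app j = f' ≫ c.ι.app j' := hee
    have hstage : ((coyoneda.obj (op X)).mapCocone (fwdB X i c)).ι.app j
        (tupleExt X i (f ≫ eqToHom (fwdG_obj_same X i F j).symm)
          (fun k h => (fwdG_obj_ne X i F h j).symm)) =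
        ((coyoneda.obj (op X)).mapCocone (fwdB X i c)).ι.app j'
        (tupleExt X i (f' ≫ eqToHom (fwdG_obj_same X i F j').symm)
          (fun k h => (fwdG_obj_ne X i F h j').symm)) := by
      funext k
      show tupleExt X i (f ≫ eqToHom (fwdG_obj_same X i F j).symm) _ k ≫
          (fwdB X i c).ι.app j k =
        tupleExt X i (f' ≫ eqToHom (fwdG_obj_same X i F j').symm) _ k ≫
          (fwdB X i c).ι.app j' k
      by_cases h : k = i
      · subst h
        rw [tupleExt_same, tupleExt_same, fwdB_app_same, fwdB_app_same]
        simp only [Category.assoc, eqToHom_trans, eqToHom_refl, Category.id_comp,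
          eqToHom_trans_assoc]
        rw [← Category.assoc, ← Category.assoc, hee']
      · rw [tupleExt_ne _ _ _ _ h, tupleExt_ne _ _ _ _ h,
          fwdB_app_ne X i c h, fwdB_app_ne X i c h]
        simp
    obtain ⟨l, u, v, huv⟩ := (Types.FilteredColimit.isColimit_eq_iff _ hmapped).1 hstage
    refine ⟨l, u, v, ?_⟩
    have hi : tupleExt X i (f ≫ eqToHom (fwdG_obj_same X i F j).symm)
          (fun k h => (fwdG_obj_ne X i F h j).symm) i ≫ ((fwdG X i F).map u) i =
        tupleExt X i (f' ≫ eqToHom (fwdG_obj_same X i F j').symm)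
          (fun k h => (fwdG_obj_ne X i F h j').symm) i ≫ ((fwdG X i F).map v) i :=
      congrFun huv i
    rw [tupleExt_same, tupleExt_same, fwdG_map_same, fwdG_map_same] at hi
    have h7 := congrArg (fun z => z ≫ eqToHom (fwdG_obj_same X i F l)) hi
    simp only [Category.assoc, eqToHom_trans, eqToHom_refl, Category.comp_id,
      eqToHom_trans_assoc, Category.id_comp] at h7
    show f ≫ F.map u = f' ≫ F.map v
    exact h7
end MainFwd

/-- An object of a product category `∏ i, C i` indexed by a set of size `< τ` is
`τ`-presentable if and only if each of its components is `τ`-presentable. -/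
theorem stmt0 (τ : Cardinal.{v}) (hτ : τ.IsRegular) (I : Type v)
    (hI : Cardinal.mk I < τ) (C : I → Type u) [∀ i, Category.{v} (C i)]
    (X : ∀ i, C i) :
    IsCardPresentable τ X ↔ ∀ i, IsCardPresentable τ (X i) := by
  constructor
  · intro h i
    exact forward τ X hτ h i
  · intro h
    exact backward τ X hτ hI h
end

section
/- Let C be a triangulated category with small coproducts that is compactly generated by a set E of compact objects (i.e. the smallest strictly full triangulated subcategory of C closed under small coproducts and containing E is C itself). Let D be a triangulated category with small coproducts and let L : C → D be an exact (triangulated) functor that preserves small coproducts (for instance, a functor admitting a right adjoint). Then L sends every compact object of C to a compact object of D if and only if L(e) is a compact object of D for every e ∈ E. -/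
universe v u u'

open CategoryTheory Limits Pretriangulated ZeroObject DirectSum

/-- An object `c` of a preadditive category with small coproducts is compact if for every
small family `(X j)` the canonical map `⨁ j, Hom(c, X j) → Hom(c, ∐ X)` is bijective. -/
def IsCompactObj {C : Type u} [Category.{v} C] [Preadditive C] [HasCoproducts.{v} C]
    (c : C) : Prop :=
  ∀ (J : Type v) (X : J → C),
    letI := Classical.decEq J
    Function.Bijective
      (⇑(DirectSum.toAddMonoid (fun j => Preadditive.rightComp c (Sigma.ι X j)) :
        (⨁ j, (c ⟶ X j)) →+ (c ⟶ ∐ X)))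

/-- A strictly full triangulated subcategory: a class of objects containing a zero object,
closed under isomorphisms, shifts, and extensions by distinguished triangles. -/
structure IsTriangSub (C : Type u) [Category.{v} C] [HasZeroObject C] [Preadditive C]
    [HasShift C ℤ] [∀ n : ℤ, (shiftFunctor C n).Additive] [Pretriangulated C]
    (S : Set C) : Prop where
  zero_mem : (0 : C) ∈ S
  mem_of_iso : ∀ {X Y : C}, (X ≅ Y) → X ∈ S → Y ∈ S
  shift_mem : ∀ (X : C) (n : ℤ), X ∈ S → X⟦n⟧ ∈ S
  ext₃ : ∀ T : Triangle C, T ∈ (distTriang C) → T.obj₁ ∈ S → T.obj₂ ∈ S → T.obj₃ ∈ S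

/-- A class of objects is closed under small coproducts. -/
def ClosedUnderCoproducts {C : Type u} [Category.{v} C] [HasCoproducts.{v} C]
    (S : Set C) : Prop :=
  ∀ (J : Type v) (X : J → C), (∀ j, X j ∈ S) → (∐ X) ∈ S

/-- A class of objects is closed under direct summands (retracts). -/
def ClosedUnderRetracts {C : Type u} [Category.{v} C] (S : Set C) : Prop :=
  ∀ X Y : C, (∃ (i : X ⟶ Y) (r : Y ⟶ X), i ≫ r = 𝟙 X) → Y ∈ S → X ∈ S

namespace StmtAux

section Basic

variable {D : Type u'} [Category.{v} D] [Preadditive D] [HasCoproducts.{v} D]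

/-- The canonical map `⨁ j, Hom(c, X j) → Hom(c, ∐ X)`. -/
noncomputable def phi {J : Type v} [DecidableEq J] (c : D) (X : J → D) :
    (⨁ j, (c ⟶ X j)) →+ (c ⟶ ∐ X) :=
  DirectSum.toAddMonoid fun j => Preadditive.rightComp c (Sigma.ι X j)

lemma isCompactObj_iff (c : D) :
    IsCompactObj c ↔ ∀ (J : Type v) (X : J → D),
      letI := Classical.decEq J
      Function.Bijective (phi c X) := Iff.rfl

lemma isCompactObj_bij {c : D} (hc : IsCompactObj c) {J : Type v} [inst : DecidableEq J]
    (X : J → D) : Function.Bijective (phi c X) := by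
  have h := hc J X
  rwa [Subsingleton.elim (Classical.decEq J) inst] at h

lemma isCompactObj_of (c : D)
    (h : ∀ (J : Type v) (inst : DecidableEq J) (X : J → D), Function.Bijective (phi c X)) :
    IsCompactObj c :=
  fun J X => h J (Classical.decEq J) X

variable {J : Type v} [DecidableEq J]

/-- Map a direct sum along a family of additive maps. -/
noncomputable def mapDS {β γ : J → Type v} [∀ j, AddCommGroup (β j)] [∀ j, AddCommGroup (γ j)]
    (ψ : ∀ j, β j →+ γ j) : (⨁ j, β j) →+ ⨁ j, γ j :=
  DirectSum.toAddMonoid fun j => (DirectSum.of γ j).comp (ψ j)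

variable {β γ δ : J → Type v} [∀ j, AddCommGroup (β j)] [∀ j, AddCommGroup (γ j)]
  [∀ j, AddCommGroup (δ j)]

lemma mapDS_of (ψ : ∀ j, β j →+ γ j) (j : J) (x : β j) :
    mapDS ψ (DirectSum.of β j x) = DirectSum.of γ j (ψ j x) := by
  simp [mapDS]

lemma mapDS_apply (ψ : ∀ j, β j →+ γ j) (d : ⨁ j, β j) (j : J) :
    mapDS ψ d j = ψ j (d j) := by
  induction d using DirectSum.induction_on with
  | zero => simp
  | of i x =>
    rw [mapDS_of]
    by_cases h : i = j
    · subst h; rw [DirectSum.of_eq_same, DirectSum.of_eq_same]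
    · rw [DirectSum.of_eq_of_ne _ _ _ (Ne.symm h), DirectSum.of_eq_of_ne _ _ _ (Ne.symm h), map_zero]
  | add x y hx hy => rw [map_add, DirectSum.add_apply, DirectSum.add_apply, map_add, hx, hy]

lemma mapDS_mapDS (ψ : ∀ j, β j →+ γ j) (χ : ∀ j, γ j →+ δ j) (d : ⨁ j, β j) :
    mapDS χ (mapDS ψ d) = mapDS (fun j => (χ j).comp (ψ j)) d := by
  induction d using DirectSum.induction_on with
  | zero => simp
  | of i x => rw [mapDS_of, mapDS_of, mapDS_of]; rfl
  | add x y hx hy => rw [map_add, map_add, map_add, hx, hy]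

lemma mapDS_id (d : ⨁ j, β j) : mapDS (fun j => AddMonoidHom.id (β j)) d = d := by
  induction d using DirectSum.induction_on with
  | zero => simp
  | of i x => rw [mapDS_of]; rfl
  | add x y hx hy => rw [map_add, hx, hy]

lemma mapDS_bijective (ψ : ∀ j, β j ≃+ γ j) :
    Function.Bijective (mapDS (fun j => (ψ j).toAddMonoidHom)) := by
  refine Function.bijective_iff_has_inverse.2
    ⟨mapDS (fun j => (ψ j).symm.toAddMonoidHom), fun d => ?_, fun d => ?_⟩
  · rw [mapDS_mapDS]
    convert mapDS_id d using 2
    ext j x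
    simp
  · rw [mapDS_mapDS]
    convert mapDS_id d using 2
    ext j x
    simp

lemma exists_mapDS_eq (ψ : ∀ j, γ j →+ β j) (d : ⨁ j, β j) (h : ∀ j, ∃ y, d j = ψ j y) :
    ∃ e : ⨁ j, γ j, mapDS ψ e = d := by
  letI : ∀ (j : J) (x : β j), Decidable (x ≠ 0) := fun j x => Classical.propDecidable _
  choose y hy using h
  refine ⟨∑ i ∈ DFinsupp.support d, DirectSum.of γ i (y i), ?_⟩
  rw [map_sum]
  have : ∀ i ∈ DFinsupp.support d, mapDS ψ (DirectSum.of γ i (y i)) = DirectSum.of β i (d i) := by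
    intro i _
    rw [mapDS_of, ← hy]
  rw [Finset.sum_congr rfl this]
  exact DirectSum.sum_support_of d

lemma phi_of (c : D) (X : J → D) (j : J) (x : c ⟶ X j) :
    phi c X (DirectSum.of _ j x) = x ≫ Sigma.ι X j := by
  simp [phi, Preadditive.rightComp]

lemma comp_phi (c c' : D) (X : J → D) (h : c' ⟶ c) (d : ⨁ j, (c ⟶ X j)) :
    phi c' X (mapDS (fun j => Preadditive.leftComp (X j) h) d) = h ≫ phi c X d := by
  induction d using DirectSum.induction_on with
  | zero => simp
  | of j x => rw [mapDS_of, phi_of, phi_of]; simp [Preadditive.leftComp]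
  | add x y hx hy => rw [map_add, map_add, map_add, hx, hy, Preadditive.comp_add]

end Basic

section Closure

variable {D : Type u'} [Category.{v} D] [Preadditive D] [HasCoproducts.{v} D]

lemma isCompact_of_retract {a b : D} (i : a ⟶ b) (r : b ⟶ a) (hir : i ≫ r = 𝟙 a)
    (hb : IsCompactObj b) : IsCompactObj a := by
  refine isCompactObj_of a (fun J inst X => ⟨fun d₁ d₂ h => ?_, fun f => ?_⟩)
  · -- injectivity
    have h0 : phi a X (d₁ - d₂) = 0 := by rw [map_sub, h, sub_self]
    have h1 : phi b X (mapDS (fun j => Preadditive.leftComp (X j) r) (d₁ - d₂)) = 0 := by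
      rw [comp_phi, h0, comp_zero]
    have h2 : mapDS (fun j => Preadditive.leftComp (X j) r) (d₁ - d₂) = 0 :=
      (map_eq_zero_iff _ (isCompactObj_bij hb X).1).mp h1
    have h3 := congrArg (mapDS (fun j => Preadditive.leftComp (X j) i)) h2
    rw [mapDS_mapDS, map_zero] at h3
    have h4 : mapDS (fun j => (Preadditive.leftComp (X j) i).comp
        (Preadditive.leftComp (X j) r)) (d₁ - d₂) = d₁ - d₂ := by
      rw [show (fun j => (Preadditive.leftComp (X j) i).comp (Preadditive.leftComp (X j) r))
          = fun j => AddMonoidHom.id _ from ?_, mapDS_id]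
      ext j x
      simp [Preadditive.leftComp, reassoc_of% hir]
    rw [h4] at h3
    exact sub_eq_zero.1 h3
  · -- surjectivity
    obtain ⟨d, hd⟩ := (isCompactObj_bij hb X).2 (r ≫ f)
    refine ⟨mapDS (fun j => Preadditive.leftComp (X j) i) d, ?_⟩
    rw [comp_phi, hd, ← Category.assoc, hir, Category.id_comp]

lemma isCompact_of_iso {a b : D} (e : a ≅ b) (ha : IsCompactObj a) : IsCompactObj b :=
  isCompact_of_retract e.inv e.hom e.inv_hom_id ha

lemma isCompact_of_isZero {a : D} (h : IsZero a) : IsCompactObj a := by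
  refine isCompactObj_of a (fun J inst X => ⟨fun d₁ d₂ _ => ?_, fun f => ⟨0, ?_⟩⟩)
  · exact DFinsupp.ext (fun j => h.eq_of_src (d₁ j) (d₂ j))
  · rw [map_zero]
    exact h.eq_of_src 0 f

lemma isCompact_adj {C : Type u} [Category.{v} C] [Preadditive C] [HasCoproducts.{v} C]
    (F : C ⥤ D) (G : D ⥤ C) [G.Additive] (adj : F ⊣ G)
    (hG : ∀ J : Type v, PreservesColimitsOfShape (Discrete J) G)
    {c : C} (hc : IsCompactObj c) : IsCompactObj (F.obj c) := by
  refine isCompactObj_of _ (fun J inst X => ?_)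
  haveI := hG J
  -- the comparison iso
  haveI : IsIso (sigmaComparison G X) := inferInstance
  -- the additive equivalences on the components
  let e : ∀ j, (F.obj c ⟶ X j) ≃+ (c ⟶ G.obj (X j)) := fun j =>
    { adj.homEquiv c (X j) with
      map_add' := fun x y => by
        simp [Adjunction.homEquiv_unit, Functor.map_add, Preadditive.comp_add] }
  have square : ∀ d : ⨁ j, (F.obj c ⟶ X j),
      adj.homEquiv c (∐ X) (phi (F.obj c) X d) =
        phi c (fun j => G.obj (X j)) (mapDS (fun j => (e j).toAddMonoidHom) d) ≫
          sigmaComparison G X := by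
    intro d
    induction d using DirectSum.induction_on with
    | zero => simp [Adjunction.homEquiv_unit]
    | of j x =>
      rw [phi_of, mapDS_of, phi_of, Category.assoc, ι_comp_sigmaComparison,
        Adjunction.homEquiv_naturality_right]
      rfl
    | add x y hx hy =>
      have hadd : ∀ u w : F.obj c ⟶ ∐ X, adj.homEquiv c (∐ X) (u + w) =
          adj.homEquiv c (∐ X) u + adj.homEquiv c (∐ X) w := by
        intro u w
        simp [Adjunction.homEquiv_unit, Preadditive.comp_add]
      rw [map_add, hadd, hx, hy, map_add, map_add, ← Preadditive.add_comp]
  have hpost : Function.Bijective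
      (fun y : c ⟶ ∐ (fun j => G.obj (X j)) => y ≫ sigmaComparison G X) := by
    constructor
    · intro x y h
      simpa using congrArg (fun z => z ≫ inv (sigmaComparison G X)) h
    · intro y
      exact ⟨y ≫ inv (sigmaComparison G X), by simp⟩
  have hbij2 : Function.Bijective (⇑(adj.homEquiv c (∐ X)) ∘ ⇑(phi (F.obj c) X)) := by
    have heq : ⇑(adj.homEquiv c (∐ X)) ∘ ⇑(phi (F.obj c) X) =
        (fun y : c ⟶ ∐ (fun j => G.obj (X j)) => y ≫ sigmaComparison G X) ∘
          ⇑(phi c fun j => G.obj (X j)) ∘ ⇑(mapDS fun j => (e j).toAddMonoidHom) := by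
      funext d
      exact square d
    rw [heq]
    exact hpost.comp ((isCompactObj_bij hc _).comp (mapDS_bijective e))
  exact (Function.Bijective.of_comp_iff' (adj.homEquiv c (∐ X)).bijective _).mp hbij2

end Closure

end StmtAux

section Triangulated

open StmtAux

variable {D : Type u'} [Category.{v} D] [HasZeroObject D] [Preadditive D]
    [HasShift D ℤ] [∀ n : ℤ, (shiftFunctor D n).Additive] [Pretriangulated D]
    [HasCoproducts.{v} D]

namespace StmtAux

lemma isCompact_shift {c : D} (hc : IsCompactObj c) (n : ℤ) : IsCompactObj (c⟦n⟧) :=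
  isCompact_adj (shiftFunctor D n) (shiftFunctor D (-n)) ((shiftEquiv D n).toAdjunction)
    (fun _ => inferInstance) hc

lemma isCompact_ext₃ (T : Triangle D) (hT : T ∈ distTriang D)
    (h₁ : IsCompactObj T.obj₁) (h₂ : IsCompactObj T.obj₂) : IsCompactObj T.obj₃ := by
  have h₁' : IsCompactObj (T.obj₁⟦(1:ℤ)⟧) := isCompact_shift h₁ 1
  have h₂' : IsCompactObj (T.obj₂⟦(1:ℤ)⟧) := isCompact_shift h₂ 1
  refine isCompactObj_of _ (fun J inst X => ⟨?_, ?_⟩)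
  · -- injectivity
    intro d₁ d₂ hd
    rw [← sub_eq_zero] at hd ⊢
    rw [← map_sub] at hd
    set d := d₁ - d₂ with hd_def
    clear_value d
    -- each component composed with mor₂ vanishes
    have hcomp : ∀ j, T.mor₂ ≫ d j = 0 := by
      have h1 : phi T.obj₂ X (mapDS (fun j => Preadditive.leftComp (X j) T.mor₂) d) = 0 := by
        rw [comp_phi, hd, comp_zero]
      have h0 : mapDS (fun j => Preadditive.leftComp (X j) T.mor₂) d = 0 :=
        (map_eq_zero_iff _ (isCompactObj_bij h₂ X).1).mp h1
      intro j
      have := congrArg (fun z => z j) h0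
      simpa [mapDS_apply, Preadditive.leftComp] using this
    -- lift each component along mor₃
    obtain ⟨e, he⟩ := exists_mapDS_eq (fun j => Preadditive.leftComp (X j) T.mor₃) d
      (fun j => by
        obtain ⟨g, hg⟩ := Triangle.yoneda_exact₃ T hT (d j) (hcomp j)
        exact ⟨g, hg⟩)
    -- mor₃ ≫ phi e = phi d = 0
    have h1 : T.mor₃ ≫ phi (T.obj₁⟦(1:ℤ)⟧) X e = 0 := by
      rw [← comp_phi, he, hd]
    -- exactness at obj₁⟦1⟧
    obtain ⟨g, hg⟩ := Triangle.yoneda_exact₂ _ (rot_of_distTriang _ (rot_of_distTriang _ hT))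
      (phi (T.obj₁⟦(1:ℤ)⟧) X e) h1
    let w' : T.obj₁⟦(1:ℤ)⟧ ⟶ T.obj₂⟦(1:ℤ)⟧ := T.rotate.rotate.mor₂
    let g' : T.obj₂⟦(1:ℤ)⟧ ⟶ ∐ X := g
    have hg' : phi (T.obj₁⟦(1:ℤ)⟧) X e = w' ≫ g' := hg
    obtain ⟨h, hh⟩ := (isCompactObj_bij h₂' X).2 g'
    have key : phi (T.obj₁⟦(1:ℤ)⟧) X e =
        phi (T.obj₁⟦(1:ℤ)⟧) X (mapDS (fun j => Preadditive.leftComp (X j) w') h) := by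
      rw [comp_phi, hh, ← hg']
    have he2 := (isCompactObj_bij h₁' X).1 key
    -- now compute d
    refine DFinsupp.ext (fun j => ?_)
    have hdj : d j = T.mor₃ ≫ e j := by
      have := congrArg (fun z => z j) he
      simpa [mapDS_apply, Preadditive.leftComp] using this.symm
    have hej : e j = w' ≫ h j := by
      have := congrArg (fun z => z j) he2
      simpa [mapDS_apply, Preadditive.leftComp] using this
    have hz : T.mor₃ ≫ w' = 0 :=
      comp_distTriang_mor_zero₁₂ _ (rot_of_distTriang _ (rot_of_distTriang _ hT))
    rw [hdj, hej, reassoc_of% hz]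
    simp
  · -- surjectivity
    intro f
    obtain ⟨d, hd⟩ := (isCompactObj_bij h₂ X).2 (T.mor₂ ≫ f)
    have hcomp : ∀ j, T.mor₁ ≫ d j = 0 := by
      have h0 : phi T.obj₁ X (mapDS (fun j => Preadditive.leftComp (X j) T.mor₁) d) = 0 := by
        rw [comp_phi, hd, ← Category.assoc, comp_distTriang_mor_zero₁₂ _ hT, zero_comp]
      have h0' : mapDS (fun j => Preadditive.leftComp (X j) T.mor₁) d = 0 :=
        (map_eq_zero_iff _ (isCompactObj_bij h₁ X).1).mp h0
      intro j
      have := congrArg (fun z => z j) h0'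
      simpa [mapDS_apply, Preadditive.leftComp] using this
    obtain ⟨e, he⟩ := exists_mapDS_eq (fun j => Preadditive.leftComp (X j) T.mor₂) d
      (fun j => by
        obtain ⟨g, hg⟩ := Triangle.yoneda_exact₂ T hT (d j) (hcomp j)
        exact ⟨g, hg⟩)
    have h1 : T.mor₂ ≫ (f - phi T.obj₃ X e) = 0 := by
      rw [Preadditive.comp_sub, ← comp_phi, he, hd, sub_self]
    obtain ⟨g, hg⟩ := Triangle.yoneda_exact₃ T hT _ h1
    obtain ⟨h, hh⟩ := (isCompactObj_bij h₁' X).2 g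
    refine ⟨e + mapDS (fun j => Preadditive.leftComp (X j) T.mor₃) h, ?_⟩
    rw [map_add, comp_phi, hh, ← hg]
    abel

lemma isCompact_biprod {a b : D} (ha : IsCompactObj a) (hb : IsCompactObj b) :
    haveI : HasBinaryBiproducts D :=
      haveI : HasFiniteCoproducts D := hasFiniteCoproducts_of_hasCoproducts.{v} D
      HasBinaryBiproducts.of_hasBinaryCoproducts
    IsCompactObj (a ⊞ b) := by
  haveI : HasFiniteCoproducts D := hasFiniteCoproducts_of_hasCoproducts.{v} D
  haveI : HasBinaryBiproducts D := HasBinaryBiproducts.of_hasBinaryCoproducts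
  have hT := inv_rot_of_distTriang _ (binaryBiproductTriangle_distinguished a b)
  exact isCompact_ext₃ _ hT (isCompact_shift hb (-1)) ha

end StmtAux

end Triangulated

section Main

open StmtAux

variable {C : Type u} [Category.{v} C] [HasZeroObject C] [Preadditive C]
    [HasShift C ℤ] [∀ n : ℤ, (shiftFunctor C n).Additive] [Pretriangulated C]
    [HasCoproducts.{v} C]

/-- Objects finitely built from `E`: the closure of `E ∪ {0}` under isomorphism, shifts and
extensions by distinguished triangles. -/
inductive FinBuilt (E : Set C) : C → Prop
  | of (e : C) (he : e ∈ E) : FinBuilt E e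
  | zero : FinBuilt E 0
  | iso {X Y : C} (e : X ≅ Y) (hX : FinBuilt E X) : FinBuilt E Y
  | shift (X : C) (n : ℤ) (hX : FinBuilt E X) : FinBuilt E (X⟦n⟧)
  | ext₃ (T : Triangle C) (hT : T ∈ distTriang C) (h₁ : FinBuilt E T.obj₁)
      (h₂ : FinBuilt E T.obj₂) : FinBuilt E T.obj₃

lemma FinBuilt.biprod {E : Set C} {a b : C} (ha : FinBuilt E a) (hb : FinBuilt E b)
    [HasBinaryBiproduct a b] : FinBuilt E (a ⊞ b) :=
  FinBuilt.ext₃ _ (inv_rot_of_distTriang _ (binaryBiproductTriangle_distinguished a b))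
    (FinBuilt.shift b (-1) hb) ha

lemma FinBuilt.isCompact_map {E : Set C}
    {D : Type u'} [Category.{v} D] [HasZeroObject D] [Preadditive D]
    [HasShift D ℤ] [∀ n : ℤ, (shiftFunctor D n).Additive] [Pretriangulated D]
    [HasCoproducts.{v} D]
    (L : C ⥤ D) [L.Additive] [L.CommShift ℤ] [L.IsTriangulated]
    (hE : ∀ e ∈ E, IsCompactObj (L.obj e)) {W : C} (hW : FinBuilt E W) :
    IsCompactObj (L.obj W) := by
  induction hW with
  | of e he => exact hE e he
  | zero => exact isCompact_of_isZero (L.map_isZero (isZero_zero C))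
  | iso e hX ih => exact isCompact_of_iso (L.mapIso e) ih
  | shift X n hX ih =>
    exact isCompact_of_iso ((L.commShiftIso n).app X).symm (isCompact_shift ih n)
  | ext₃ T hT h₁ h₂ ih₁ ih₂ =>
    exact isCompact_ext₃ (L.mapTriangle.obj T) (L.map_distinguished T hT) ih₁ ih₂

lemma FinBuilt.isCompact {E : Set C} (hE : ∀ e ∈ E, IsCompactObj e) {W : C}
    (hW : FinBuilt E W) : IsCompactObj W := by
  have := FinBuilt.isCompact_map (E := E) (𝟭 C) (fun e he => hE e he) hW
  exact this

end Main

section MainProof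

open StmtAux

variable {C : Type u} [Category.{v} C] [HasZeroObject C] [Preadditive C]
    [HasShift C ℤ] [∀ n : ℤ, (shiftFunctor C n).Additive] [Pretriangulated C]
    [IsTriangulated C] [HasCoproducts.{v} C]

/-- The class of objects `X` such that every map from a compact object to `X` factors through
an object finitely built from `E`. -/
def FactorClass (E : Set C) : Set C :=
  {X : C | ∀ c : C, IsCompactObj c → ∀ f : c ⟶ X,
    ∃ W : C, FinBuilt E W ∧ ∃ (g : c ⟶ W) (h : W ⟶ X), f = g ≫ h}

lemma finBuilt_mem_factorClass {E : Set C} {X : C} (hX : FinBuilt E X) :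
    X ∈ FactorClass E := fun c _ f => ⟨X, hX, f, 𝟙 X, (Category.comp_id f).symm⟩

lemma factorClass_shift_mem {E : Set C} (hE : ∀ e ∈ E, IsCompactObj e) (X : C) (n : ℤ)
    (hX : X ∈ FactorClass E) : X⟦n⟧ ∈ FactorClass E := by
  intro c hc f
  have adj := ((shiftEquiv C n).symm.toAdjunction)
  -- adj : shiftFunctor C (-n) ⊣ shiftFunctor C n
  obtain ⟨W, hW, g, h, hgh⟩ := hX (c⟦(-n:ℤ)⟧) (isCompact_shift hc (-n))
    ((adj.homEquiv c X).symm f)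
  refine ⟨W⟦n⟧, FinBuilt.shift W n hW, adj.homEquiv c W g, h⟦n⟧', ?_⟩
  have := congrArg (adj.homEquiv c X) hgh
  exact ((adj.homEquiv c X).apply_symm_apply f).symm.trans
    (this.trans (adj.homEquiv_naturality_right g h))

lemma factorClass_triangSub {E : Set C} (hE : ∀ e ∈ E, IsCompactObj e) :
    IsTriangSub C (FactorClass E) := by
  constructor
  · exact finBuilt_mem_factorClass FinBuilt.zero
  · intro X Y e hX c hc f
    obtain ⟨W, hW, g, h, hgh⟩ := hX c hc (f ≫ e.inv)
    refine ⟨W, hW, g, h ≫ e.hom, ?_⟩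
    rw [← Category.assoc, ← hgh, Category.assoc, e.inv_hom_id, Category.comp_id]
  · exact fun X n hX => factorClass_shift_mem hE X n hX
  · intro T hT hS₁ hS₂ c hc f
    -- Step 1: factor f ≫ T.mor₃ through W₁
    obtain ⟨W₁, hW₁, a, b, hab⟩ := factorClass_shift_mem hE T.obj₁ 1 hS₁ c hc (f ≫ T.mor₃)
    -- Step 2: cone on a
    obtain ⟨Q, p, q, hA⟩ := distinguished_cocone_triangle a
    set A := Triangle.mk a p q with hA_def
    have hQ : IsCompactObj Q :=
      isCompact_ext₃ A hA hc (FinBuilt.isCompact hE hW₁)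
    -- Step 4: complete (f, b) to a morphism A ⟶ T.rotate.rotate
    have hT'' := rot_of_distTriang _ (rot_of_distTriang _ hT)
    obtain ⟨g, hg₁, hg₂⟩ := complete_distinguished_triangle_morphism A T.rotate.rotate hA hT''
      f b (by exact hab.symm)
    -- Step 5: factor g through W₂
    obtain ⟨W₂, hW₂, g₁, g₂, hg⟩ := factorClass_shift_mem hE T.obj₂ 1 hS₂ Q hQ g
    -- Step 6: cone on p ≫ g₁
    obtain ⟨V, l, m, hB⟩ := distinguished_cocone_triangle (p ≫ g₁)
    set B := Triangle.mk (p ≫ g₁) l m with hB_def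
    have hV : FinBuilt E V := FinBuilt.ext₃ B hB hW₁ hW₂
    -- Step 7: complete (b, g₂) to a morphism B ⟶ T.rotate.rotate.rotate
    have hT''' := rot_of_distTriang _ hT''
    obtain ⟨t, ht₁, ht₂⟩ := complete_distinguished_triangle_morphism B T.rotate.rotate.rotate
      hB hT''' b g₂ (by
        change (p ≫ g₁) ≫ g₂ = b ≫ T.rotate.rotate.mor₂
        rw [Category.assoc, ← hg]
        exact hg₁)
    -- Step 8: complete (𝟙 W₁, g₁) to a morphism A.rotate ⟶ B
    obtain ⟨κ, hκ₁, hκ₂⟩ := complete_distinguished_triangle_morphism A.rotate B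
      (rot_of_distTriang _ hA) hB (𝟙 W₁) g₁ (by simp [A, B]; exact (Category.id_comp _).symm)
    let κ' : c⟦(1:ℤ)⟧ ⟶ V := κ
    let t' : V ⟶ T.obj₃⟦(1:ℤ)⟧ := t
    -- Step 9: q ≫ (f⟦1⟧' - κ ≫ t) = 0
    have step9 : q ≫ (f⟦(1:ℤ)⟧' - κ' ≫ t') = 0 := by
      have e1 : q ≫ f⟦(1:ℤ)⟧' = g ≫ T.rotate.rotate.mor₃ := hg₂
      have e2 : q ≫ κ' = g₁ ≫ l := hκ₁
      have e3 : l ≫ t' = g₂ ≫ T.rotate.rotate.mor₃ := ht₁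
      rw [Preadditive.comp_sub, e1, ← Category.assoc, e2, Category.assoc, e3]
      simp [hg]
      exact sub_eq_zero.2 (Category.assoc _ _ _)
    -- Step 10: factor f⟦1⟧' - κ ≫ t through A.rotate.mor₃
    obtain ⟨r, hr⟩ := Triangle.yoneda_exact₃ A.rotate (rot_of_distTriang _ hA)
      (f⟦(1:ℤ)⟧' - κ' ≫ t') step9
    let n' : c⟦(1:ℤ)⟧ ⟶ W₁⟦(1:ℤ)⟧ := A.rotate.mor₃
    let r' : W₁⟦(1:ℤ)⟧ ⟶ T.obj₃⟦(1:ℤ)⟧ := r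
    have hr' : f⟦(1:ℤ)⟧' - κ' ≫ t' = n' ≫ r' := hr
    -- Step 11: f⟦1⟧' factors through V ⊞ W₁⟦1⟧
    haveI : HasFiniteCoproducts C := hasFiniteCoproducts_of_hasCoproducts.{v} C
    haveI : HasBinaryBiproducts C := HasBinaryBiproducts.of_hasBinaryCoproducts
    have hM : FinBuilt E (V ⊞ (W₁⟦(1:ℤ)⟧)) := FinBuilt.biprod hV (FinBuilt.shift W₁ 1 hW₁)
    have hfact : f⟦(1:ℤ)⟧' = biprod.lift κ' n' ≫ biprod.desc t' r' := by
      rw [biprod.lift_desc]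
      linear_combination (norm := abel) hr'
    -- Step 12: deshift
    set M := V ⊞ (W₁⟦(1:ℤ)⟧) with hM_def
    set G : c⟦(1:ℤ)⟧ ⟶ M := biprod.lift κ' n' with hG_def
    set H : M ⟶ T.obj₃⟦(1:ℤ)⟧ := biprod.desc t' r' with hH_def
    refine ⟨M⟦(-1:ℤ)⟧, FinBuilt.shift M (-1) hM, ?_, ?_, ?_⟩
    · exact (shiftFunctor C (1:ℤ)).preimage (G ≫ (shiftNegShift M (1:ℤ)).inv)
    · exact (shiftFunctor C (1:ℤ)).preimage ((shiftNegShift M (1:ℤ)).hom ≫ H)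
    · apply (shiftFunctor C (1:ℤ)).map_injective
      rw [Functor.map_comp, Functor.map_preimage, Functor.map_preimage]
      simp only [Category.assoc, Iso.inv_hom_id_assoc]
      exact hfact

lemma factorClass_closedUnderCoproducts {E : Set C} :
    ClosedUnderCoproducts (FactorClass E) := by
  intro J X hX c hc f
  haveI : HasFiniteCoproducts C := hasFiniteCoproducts_of_hasCoproducts.{v} C
  haveI : HasBinaryBiproducts C := HasBinaryBiproducts.of_hasBinaryCoproducts
  letI : DecidableEq J := Classical.decEq J
  obtain ⟨d, hd⟩ := (isCompactObj_bij hc X).2 f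
  subst hd
  induction d using DirectSum.induction_on with
  | zero =>
    refine ⟨0, FinBuilt.zero, 0, 0, ?_⟩
    rw [map_zero, zero_comp]
  | of j x =>
    obtain ⟨W, hW, g, h, hgh⟩ := hX j c hc x
    refine ⟨W, hW, g, h ≫ Sigma.ι X j, ?_⟩
    rw [phi_of, hgh, Category.assoc]
  | add x y hx hy =>
    obtain ⟨W₁, hW₁, g₁, h₁, hgh₁⟩ := hx
    obtain ⟨W₂, hW₂, g₂, h₂, hgh₂⟩ := hy
    refine ⟨W₁ ⊞ W₂, FinBuilt.biprod hW₁ hW₂, biprod.lift g₁ g₂, biprod.desc h₁ h₂, ?_⟩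
    rw [map_add, biprod.lift_desc, hgh₁, hgh₂]

end MainProof

/-- Let `C` be compactly generated by a set `E` of compact objects and let `L : C ⥤ D` be an
exact (triangulated) functor preserving small coproducts. Then `L` preserves compact objects
if and only if `L e` is compact for every `e ∈ E`. -/
theorem stmt2 {C : Type u} [Category.{v} C] [HasZeroObject C] [Preadditive C]
    [HasShift C ℤ] [∀ n : ℤ, (shiftFunctor C n).Additive] [Pretriangulated C]
    [IsTriangulated C] [HasCoproducts.{v} C]
    {D : Type u'} [Category.{v} D] [HasZeroObject D] [Preadditive D]
    [HasShift D ℤ] [∀ n : ℤ, (shiftFunctor D n).Additive] [Pretriangulated D]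
    [IsTriangulated D] [HasCoproducts.{v} D]
    (E : Set C) (hE : ∀ e ∈ E, IsCompactObj e)
    (hgen : ∀ S : Set C, IsTriangSub C S → ClosedUnderCoproducts S → E ⊆ S →
      S = Set.univ)
    (L : C ⥤ D) [L.Additive] [L.CommShift ℤ] [L.IsTriangulated]
    (hL : ∀ J : Type v, PreservesColimitsOfShape (Discrete J) L) :
    (∀ X : C, IsCompactObj X → IsCompactObj (L.obj X)) ↔
      ∀ e ∈ E, IsCompactObj (L.obj e) := by
  constructor
  · intro h e he
    exact h e (hE e he)
  · intro he X hX
    have hfc : FactorClass E = Set.univ := by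
      apply hgen
      · exact factorClass_triangSub hE
      · exact factorClass_closedUnderCoproducts
      · intro e hee
        exact finBuilt_mem_factorClass (FinBuilt.of e hee)
    have hXmem : X ∈ FactorClass E := by rw [hfc]; trivial
    obtain ⟨W, hW, g, h, hgh⟩ := hXmem X hX (𝟙 X)
    have hLW : IsCompactObj (L.obj W) := FinBuilt.isCompact_map L he hW
    exact StmtAux.isCompact_of_retract (L.map g) (L.map h)
      (by rw [← L.map_comp, ← hgh, L.map_id]) hLW
end

section
/- Let κ be a regular cardinal and let B be a type which is a κ-presentable object of the category Type. For any map of types f : E → B, the object (E, f) of the over category Over B is κ-presentable if and only if E is a κ-presentable object of Type. In other words, the forgetful (source) functor Over B → Type preserves and detects κ-presentable objects. -/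
universe w v u u'

open CategoryTheory Limits Opposite

lemma isFiltered_of_isCardFiltered_s5 {J : Type u} [SmallCategory J] {κ : Cardinal.{u}}
    (hκ : κ.IsRegular) (hJ : IsCardFiltered J κ) : IsFiltered J := by
  apply IsFiltered.of_cocone_nonempty.{u}
  intro A _ _ F
  have hfinA : Finite A := Finite.of_fintype A
  have hfinArr : Finite (Arrow A) := by
    have : ∀ (X Y : A), Finite (X ⟶ Y) := fun X Y => Finite.of_fintype _
    exact Finite.of_injective
      (fun g : Arrow A => (⟨g.left, g.right, g.hom⟩ : Σ (X : A) (Y : A), X ⟶ Y))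
      (by rintro ⟨l₁, r₁, h₁⟩ ⟨l₂, r₂, h₂⟩ e
          obtain ⟨rfl, e⟩ := Sigma.mk.inj_iff.mp e
          obtain ⟨rfl, e⟩ := Sigma.mk.inj_iff.mp (eq_of_heq e)
          cases eq_of_heq e; rfl)
  exact hJ A F (lt_of_lt_of_le (Cardinal.lt_aleph0_of_finite A) hκ.aleph0_le)
    (lt_of_lt_of_le (Cardinal.lt_aleph0_of_finite (Arrow A)) hκ.aleph0_le)

/-- For `κ`-presentable `B`, an object `f : E → B` of `Over B` is `κ`-presentable
if and only if `E` is a `κ`-presentable type: the source functor `Over B ⥤ Type`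
preserves and detects `κ`-presentable objects. -/
theorem stmt5 (κ : Cardinal.{u}) (hκ : κ.IsRegular) (B : Type u)
    (hB : IsCardPresentable κ B) (E : Type u) (f : E → B) :
    IsCardPresentable κ (Over.mk (X := B) (Y := E) (TypeCat.ofHom f)) ↔ IsCardPresentable κ E := by
  constructor
  · -- forward direction: Over.mk f presentable → E presentable
    intro h J _ hJ
    have hfil : IsFiltered J := isFiltered_of_isCardFiltered_s5 hκ hJ
    have hpres := h J hJ
    constructor
    intro F
    constructor
    intro c hc
    -- the diagram j ↦ (B × F j → B) in Over B
    let F' : J ⥤ Over B :=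
      { obj := fun j => Over.mk (TypeCat.ofHom (Prod.fst : B × F.obj j → B))
        map := fun {i j} g => Over.homMk (TypeCat.ofHom (fun (p : B × F.obj i) => (p.1, F.map g p.2)))
        map_id := by
          intro j
          apply Over.OverMorphism.ext
          ext p
          simp [FunctorToTypes.map_id_apply]
        map_comp := by
          intro i j k g g'
          apply Over.OverMorphism.ext
          ext p
          simp [FunctorToTypes.map_comp_apply] }
    let c' : Cocone F' :=
      { pt := Over.mk (TypeCat.ofHom (Prod.fst : B × c.pt → B))
        ι :=
          { app := fun j => Over.homMk (TypeCat.ofHom (fun (p : B × F.obj j) => (p.1, c.ι.app j p.2)))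
            naturality := by
              intro i j g
              apply Over.OverMorphism.ext
              ext (p : B × F.obj i)
              have := types_congr_hom (c.w g) p.2
              dsimp [F', Over.homMk_left] at this ⊢
              show (p.1, c.ι.app j (F.map g p.2)) = (p.1, c.ι.app i p.2); rw [this] } }
    have h1 : IsColimit ((Over.forget B).mapCocone c') := by
      apply Types.FilteredColimit.isColimitOf
      · intro (x : B × c.pt)
        obtain ⟨j, y, hy⟩ := Types.jointly_surjective F hc x.2
        refine ⟨j, (x.1, y), ?_⟩
        have : x = (x.1, x.2) := rfl
        rw [this]
        show (x.1, x.2) = (x.1, c.ι.app j y)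
        rw [hy]
      · intro i j (xi : B × F.obj i) (xj : B × F.obj j) e
        dsimp [c'] at e
        have e1 : xi.1 = xj.1 := congrArg Prod.fst e
        have e2 : c.ι.app i xi.2 = c.ι.app j xj.2 := congrArg Prod.snd e
        obtain ⟨k, g, g', hg⟩ := (Types.FilteredColimit.isColimit_eq_iff F hc).mp e2
        exact ⟨k, g, g', by show (xi.1, F.map g xi.2) = (xj.1, F.map g' xj.2); rw [e1, hg]⟩
    have h2 : IsColimit c' := isColimitOfReflects (Over.forget B) h1
    have h3 : IsColimit ((coyoneda.obj (op (Over.mk (X := B) (Y := E) (TypeCat.ofHom f)))).mapCocone c') :=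
      isColimitOfPreserves _ h2
    refine ⟨Types.FilteredColimit.isColimitOf _ _ ?_ ?_⟩
    · intro (u : E ⟶ c.pt)
      let φ : Over.mk (X := B) (Y := E) (TypeCat.ofHom f) ⟶ c'.pt :=
        Over.homMk (TypeCat.ofHom (fun e => (f e, u e))) rfl
      obtain ⟨j, ψ, hψ⟩ := Types.jointly_surjective _ h3 φ
      refine ⟨j, TypeCat.ofHom (fun e => (ψ.left e).2), ?_⟩
      apply ConcreteCategory.hom_ext; intro e
      have := types_congr_hom (congrArg CommaMorphism.left hψ) e
      dsimp [c', φ] at this ⊢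
      exact (congrArg Prod.snd this).symm
    · intro i j (ui : E ⟶ F.obj i) (uj : E ⟶ F.obj j) e
      dsimp at e
      let ψi : Over.mk (X := B) (Y := E) (TypeCat.ofHom f) ⟶ F'.obj i :=
        Over.homMk (TypeCat.ofHom (fun x => (f x, ui x))) rfl
      let ψj : Over.mk (X := B) (Y := E) (TypeCat.ofHom f) ⟶ F'.obj j :=
        Over.homMk (TypeCat.ofHom (fun x => (f x, uj x))) rfl
      have heq : ((coyoneda.obj (op (Over.mk (X := B) (Y := E) (TypeCat.ofHom f)))).mapCocone c').ι.app i ψi =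
          ((coyoneda.obj (op (Over.mk (X := B) (Y := E) (TypeCat.ofHom f)))).mapCocone c').ι.app j ψj := by
        apply Over.OverMorphism.ext
        ext x
        have := types_congr_hom e x
        dsimp [c', ψi, ψj, Over.homMk_left] at this ⊢
        show (f x, c.ι.app i (ui x)) = (f x, c.ι.app j (uj x)); rw [this]
      obtain ⟨k, g, g', hg⟩ := (Types.FilteredColimit.isColimit_eq_iff _ h3).mp heq
      refine ⟨k, g, g', ?_⟩
      apply ConcreteCategory.hom_ext; intro x
      have := types_congr_hom (congrArg CommaMorphism.left hg) x
      dsimp [F', ψi, ψj] at this ⊢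
      exact congrArg Prod.snd this
  · -- backward direction: E presentable → Over.mk f presentable
    intro h J _ hJ
    have hfil : IsFiltered J := isFiltered_of_isCardFiltered_s5 hκ hJ
    have hpres := h J hJ
    constructor
    intro F
    constructor
    intro c hc
    have h1 : IsColimit ((Over.forget B).mapCocone c) := isColimitOfPreserves _ hc
    have h2 : IsColimit ((coyoneda.obj (op E)).mapCocone ((Over.forget B).mapCocone c)) :=
      isColimitOfPreserves _ h1
    refine ⟨Types.FilteredColimit.isColimitOf _ _ ?_ ?_⟩
    · intro x
      obtain ⟨j, (u : E ⟶ (F.obj j).left), hu⟩ := Types.jointly_surjective _ h2 x.left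
      refine ⟨j, Over.homMk u ?_, ?_⟩
      · ext e
        show (F.obj j).hom (u e) = f e
        have w1 : c.pt.hom ((c.ι.app j).left (u e)) = (F.obj j).hom (u e) :=
          types_congr_hom (Over.w (c.ι.app j)) (u e)
        have hue : (c.ι.app j).left (u e) = x.left e := types_congr_hom hu e
        have w2 : c.pt.hom (x.left e) = f e := types_congr_hom (Over.w x) e
        exact w1.symm.trans ((congrArg c.pt.hom hue).trans w2)
      · apply Over.OverMorphism.ext
        dsimp at hu ⊢
        exact hu.symm
    · intro i j ψi ψj e
      have e' : ((coyoneda.obj (op E)).mapCocone ((Over.forget B).mapCocone c)).ι.app i ψi.left =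
          ((coyoneda.obj (op E)).mapCocone ((Over.forget B).mapCocone c)).ι.app j ψj.left := by
        dsimp
        exact congrArg CommaMorphism.left e
      obtain ⟨k, g, g', hg⟩ := (Types.FilteredColimit.isColimit_eq_iff _ h2).mp e'
      refine ⟨k, g, g', ?_⟩
      apply Over.OverMorphism.ext
      exact hg
end

section
/- Let κ be an uncountable regular cardinal and let B be a type which is a κ-presentable object of Type. Then the terminal object of the over category Over B (namely the identity map B → B) is κ-presentable, and the binary categorical product (given by the fiber product over B) of any two κ-presentable objects of Over B is again a κ-presentable object of Over B. -/
universe w v u u'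

open CategoryTheory Limits Opposite

namespace Stmt14Aux

variable {κ : Cardinal.{u}}

instance widePushoutShapeHomSubsingleton {T : Type u} (a b : WidePushoutShape T) :
    Subsingleton (a ⟶ b) :=
  ⟨fun (f g : WidePushoutShape.Hom a b) => by cases f <;> cases g <;> rfl⟩

lemma arrow_le {A : Type u} [SmallCategory A] [∀ a b : A, Subsingleton (a ⟶ b)] :
    Cardinal.mk (Arrow A) ≤ Cardinal.mk A * Cardinal.mk A := by
  have hinj : Function.Injective (fun f : Arrow A => (f.left, f.right)) := by
    rintro ⟨l, r, φ⟩ ⟨l', r', ψ⟩ h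
    simp only [Prod.mk.injEq] at h
    obtain ⟨rfl, rfl⟩ := h
    obtain rfl := Subsingleton.elim φ ψ
    rfl
  calc Cardinal.mk (Arrow A) ≤ Cardinal.mk (A × A) := Cardinal.mk_le_of_injective hinj
    _ = Cardinal.mk A * Cardinal.mk A := by rw [Cardinal.mk_prod]; simp

lemma arrow_lt (hκ : Cardinal.aleph0 < κ) {A : Type u} [SmallCategory A]
    [∀ a b : A, Subsingleton (a ⟶ b)] (hA : Cardinal.mk A < κ) :
    Cardinal.mk (Arrow A) < κ :=
  arrow_le.trans_lt (Cardinal.mul_lt_of_lt hκ.le hA hA)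

lemma isFiltered_of_isCardFiltered (hκ : Cardinal.aleph0 < κ) {J : Type u} [SmallCategory J]
    (hJ : IsCardFiltered J κ) : IsFiltered J := by
  apply IsFiltered.of_cocone_nonempty.{u}
  intro A _ _ F
  have hfinA : Finite A := Finite.of_fintype A
  have hfinArr : Finite (Arrow A) := by
    have hsurj : Function.Surjective
        (fun p : Σ q : A × A, q.1 ⟶ q.2 => (Arrow.mk p.2 : Arrow A)) := by
      rintro ⟨l, r, φ⟩
      exact ⟨⟨(l, r), φ⟩, rfl⟩
    exact Finite.of_surjective _ hsurj
  exact hJ A F ((Cardinal.lt_aleph0_of_finite A).trans hκ)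
    ((Cardinal.lt_aleph0_of_finite (Arrow A)).trans hκ)

lemma exists_cocone_family (hκ : Cardinal.aleph0 < κ) {J : Type u} [SmallCategory J]
    (hJ : IsCardFiltered J κ) {T : Type u} (hT : Cardinal.mk T < κ) (j : T → J) :
    ∃ k : J, ∀ t, Nonempty (j t ⟶ k) := by
  have hDT : Cardinal.mk (Discrete T) < κ := by
    rwa [Cardinal.mk_congr CategoryTheory.discreteEquiv]
  obtain ⟨c⟩ := hJ (Discrete T) (Discrete.functor j) hDT (arrow_lt hκ hDT)
  exact ⟨c.pt, fun t => ⟨c.ι.app ⟨t⟩⟩⟩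

lemma exists_equalize (hκ : Cardinal.aleph0 < κ) {J : Type u} [SmallCategory J]
    (hJ : IsCardFiltered J κ) {T : Type u} (hT : Cardinal.mk T < κ) {j₀ : J} {k : T → J}
    (e : ∀ t, j₀ ⟶ k t) :
    ∃ (m : J) (f : j₀ ⟶ m) (g : ∀ t, k t ⟶ m), ∀ t, e t ≫ g t = f := by
  have hDT : Cardinal.mk (WidePushoutShape T) < κ := by
    have h1 : Cardinal.mk (WidePushoutShape T) = Cardinal.mk T + 1 := Cardinal.mk_option
    rw [h1]
    exact Cardinal.add_lt_of_lt hκ.le hT (Cardinal.one_lt_aleph0.trans hκ)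
  obtain ⟨c⟩ := hJ (WidePushoutShape T) (WidePushoutShape.wideSpan j₀ k e) hDT (arrow_lt hκ hDT)
  refine ⟨c.pt, c.ι.app none, fun t => c.ι.app (some t), fun t => ?_⟩
  have := c.ι.naturality (WidePushoutShape.Hom.init t)
  simp at this; exact this

/-- If the domain of `X : Over B` has cardinality `< κ`, then `X` is `κ`-presentable. -/
theorem over_presentable_of_card_lt (hκ : Cardinal.aleph0 < κ) {B : Type u} (X : Over B)
    (hX : Cardinal.mk X.left < κ) : IsCardPresentable κ X := by
  intro J _ hJ
  have hfil : IsFiltered J := isFiltered_of_isCardFiltered hκ hJ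
  refine ⟨fun {F} => ⟨fun {c} hc => ⟨?_⟩⟩⟩
  have hc' : IsColimit ((Over.forget B).mapCocone c) := isColimitOfPreserves _ hc
  apply Types.FilteredColimit.isColimitOf
  · -- joint surjectivity
    intro u
    have hu : ∀ x : X.left, ∃ (j : J) (y : (F.obj j).left), (c.ι.app j).left y = u.left x :=
      fun x => Types.jointly_surjective_of_isColimit hc' (u.left x)
    choose jx yx hxy using hu
    obtain ⟨k, hk⟩ := exists_cocone_family hκ hJ hX jx
    have fx : ∀ x, jx x ⟶ k := fun x => (hk x).some
    let v : X.left → (F.obj k).left := fun x => (F.map (fx x)).left (yx x)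
    have hv : ∀ x, (c.ι.app k).left (v x) = u.left x := by
      intro x
      have h2 := types_congr_hom (congrArg CommaMorphism.left (c.w (fx x))) (yx x)
      exact h2.trans (hxy x)
    have hw : ∀ x, (F.obj k).hom (v x) = X.hom x := by
      intro x
      have h3 := types_congr_hom (Over.w (c.ι.app k)) (v x)
      have h4 := types_congr_hom (Over.w u) x
      simp only [Functor.const_obj_obj, types_comp_apply] at h3 h4
      rw [← h3, hv x, h4]
    refine ⟨k, Over.homMk (TypeCat.ofHom v) (ConcreteCategory.hom_ext _ _ hw), ?_⟩
    apply Over.OverMorphism.ext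
    ext x
    exact (hv x).symm
  · -- injectivity
    intro j j' v v' h
    have hcomp : v ≫ c.ι.app j = v' ≫ c.ι.app j' := h
    let j₀ := IsFiltered.max j j'
    let w : X ⟶ F.obj j₀ := v ≫ F.map (IsFiltered.leftToMax j j')
    let w' : X ⟶ F.obj j₀ := v' ≫ F.map (IsFiltered.rightToMax j j')
    have hww : w ≫ c.ι.app j₀ = w' ≫ c.ι.app j₀ := by
      simp only [w, w', Category.assoc, c.w]
      exact hcomp
    have key : ∀ x : X.left,
        ∃ (m : J) (d : j₀ ⟶ m),
          (F.map d).left (w.left x) = (F.map d).left (w'.left x) := by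
      intro x
      have heq : ((Over.forget B).mapCocone c).ι.app j₀ (w.left x) =
          ((Over.forget B).mapCocone c).ι.app j₀ (w'.left x) := by
        have := types_congr_hom (congrArg CommaMorphism.left hww) x
        simp at this; exact this
      replace heq := (Types.FilteredColimit.isColimit_eq_iff (F ⋙ Over.forget B) hc').1 heq
      obtain ⟨m₀, e, e', he⟩ := heq
      refine ⟨IsFiltered.coeq e e', e ≫ IsFiltered.coeqHom e e', ?_⟩
      have hcond : e ≫ IsFiltered.coeqHom e e' = e' ≫ IsFiltered.coeqHom e e' :=
        IsFiltered.coeq_condition e e'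
      calc (F.map (e ≫ IsFiltered.coeqHom e e')).left (w.left x)
          = (show (F.obj (IsFiltered.coeq e e')).left from ((Over.forget B).map (F.map (IsFiltered.coeqHom e e')))
              (((F ⋙ Over.forget B).map e) (w.left x))) := by
            simp [Over.forget]; rfl
        _ = (show (F.obj (IsFiltered.coeq e e')).left from ((Over.forget B).map (F.map (IsFiltered.coeqHom e e')))
              (((F ⋙ Over.forget B).map e') (w'.left x))) := by rw [he]
        _ = (F.map (e' ≫ IsFiltered.coeqHom e e')).left (w'.left x) := by simp [Over.forget]; rfl
        _ = (F.map (e ≫ IsFiltered.coeqHom e e')).left (w'.left x) := by rw [← hcond]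
    choose mx dx hdx using key
    obtain ⟨m, f, g, hg⟩ := exists_equalize hκ hJ hX (k := mx) dx
    have hfinal : w ≫ F.map f = w' ≫ F.map f := by
      apply Over.OverMorphism.ext
      ext x
      have h1 : (F.map f).left (w.left x) = (F.map f).left (w'.left x) := by
        rw [← hg x]
        have e1 : F.map (dx x ≫ g x) = F.map (dx x) ≫ F.map (g x) := F.map_comp _ _
        rw [e1]
        show ((F.map (dx x)).left ≫ (F.map (g x)).left) (w.left x) =
          ((F.map (dx x)).left ≫ (F.map (g x)).left) (w'.left x)
        simp only [types_comp_apply]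
        rw [hdx x]
      simpa using h1
    refine ⟨m, IsFiltered.leftToMax j j' ≫ f, IsFiltered.rightToMax j j' ≫ f, ?_⟩
    show v ≫ F.map (IsFiltered.leftToMax j j' ≫ f) = v' ≫ F.map (IsFiltered.rightToMax j j' ≫ f)
    simp only [F.map_comp, ← Category.assoc]
    exact hfinal

/-- The poset of subsets of `T` of cardinality `< κ`. -/
def SmallSub (κ : Cardinal.{u}) (T : Type u) : Type u := {S : Set T // Cardinal.mk S < κ}

instance (T : Type u) : PartialOrder (SmallSub κ T) := Subtype.partialOrder _

/-- The inclusion diagram of small subsets of `T`, as types. -/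
def smallSubDiag (κ : Cardinal.{u}) (T : Type u) : SmallSub κ T ⥤ Type u where
  obj S := S.1
  map {S S'} h := TypeCat.ofHom fun x : S.1 => (⟨x.1, leOfHom h x.2⟩ : S'.1)
  map_id S := rfl
  map_comp {S S' S''} h h' := rfl

lemma smallSub_isCardFiltered (hκr : κ.IsRegular) (T : Type u) :
    IsCardFiltered (SmallSub κ T) κ := by
  intro A _ F hA _
  have hpt : Cardinal.mk (⋃ a : A, (F.obj a).1 : Set T) < κ :=
    (Cardinal.card_iUnion_lt_iff_forall_of_isRegular hκr hA).2 fun a => (F.obj a).2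
  refine ⟨⟨⟨⋃ a : A, (F.obj a).1, hpt⟩,
    { app := fun a => homOfLE ?_,
      naturality := fun a b f => Subsingleton.elim _ _ }⟩⟩
  exact Set.subset_iUnion (fun a : A => (F.obj a).1) a

/-- The cocone over the small-subset diagram with apex `T`. -/
def smallSubCocone (κ : Cardinal.{u}) (T : Type u) : Cocone (smallSubDiag κ T) where
  pt := T
  ι := { app := fun S => TypeCat.ofHom Subtype.val, naturality := fun S S' h => rfl }

lemma one_lt_kappa (hκ : Cardinal.aleph0 < κ) : (1 : Cardinal.{u}) < κ :=
  Cardinal.one_lt_aleph0.trans hκ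

noncomputable def smallSubIsColimit (hκ : Cardinal.aleph0 < κ) (T : Type u) :
    IsColimit (smallSubCocone κ T) := by
  apply Types.FilteredColimit.isColimitOf
  · intro x
    refine ⟨⟨({x} : Set T), ?_⟩, ⟨x, rfl⟩, rfl⟩
    exact (Cardinal.mk_singleton (α := T) x).trans_lt (one_lt_kappa hκ)
  · intro S S' a a' h
    have hcard : Cardinal.mk (S.1 ∪ S'.1 : Set T) < κ :=
      (Cardinal.mk_union_le _ _).trans_lt (Cardinal.add_lt_of_lt hκ.le S.2 S'.2)
    refine ⟨⟨S.1 ∪ S'.1, hcard⟩, homOfLE Set.subset_union_left,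
      homOfLE Set.subset_union_right, ?_⟩
    exact Subtype.ext (show a.1 = a'.1 from h)

/-- The small-subset diagram lifted to `Over B` along `P : Over B`. -/
def smallSubOverDiag (κ : Cardinal.{u}) {B : Type u} (P : Over B) :
    SmallSub κ P.left ⥤ Over B where
  obj S := Over.mk (TypeCat.ofHom fun x : S.1 => P.hom x.1)
  map {S S'} h := Over.homMk (TypeCat.ofHom fun x : S.1 => (⟨x.1, leOfHom h x.2⟩ : S'.1)) rfl
  map_id S := by apply Over.OverMorphism.ext; rfl
  map_comp h h' := by apply Over.OverMorphism.ext; rfl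

def smallSubOverCocone (κ : Cardinal.{u}) {B : Type u} (P : Over B) :
    Cocone (smallSubOverDiag κ P) where
  pt := P
  ι := { app := fun S => Over.homMk (TypeCat.ofHom Subtype.val) rfl,
         naturality := fun S S' h => by apply Over.OverMorphism.ext; rfl }

noncomputable def smallSubOverIsColimit (hκ : Cardinal.aleph0 < κ) {B : Type u} (P : Over B) :
    IsColimit (smallSubOverCocone κ P) := by
  apply isColimitOfReflects (Over.forget B)
  have : IsColimit (smallSubCocone κ P.left) := smallSubIsColimit hκ P.left
  apply IsColimit.ofIsoColimit this
  exact Cocones.ext (Iso.refl _) (fun S => rfl)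

/-- A `κ`-presentable object of `Over B` has domain of cardinality `< κ`. -/
theorem card_lt_of_over_presentable (hκr : κ.IsRegular) (hκ : Cardinal.aleph0 < κ)
    {B : Type u} (P : Over B) (hP : IsCardPresentable κ P) : Cardinal.mk P.left < κ := by
  have hJ : IsCardFiltered (SmallSub κ P.left) κ := smallSub_isCardFiltered hκr P.left
  have := hP (SmallSub κ P.left) hJ
  obtain ⟨hcoy⟩ := PreservesColimit.preserves
    (F := coyoneda.obj (op P)) (smallSubOverIsColimit hκ P)
  obtain ⟨S, v, hv⟩ := Types.jointly_surjective_of_isColimit hcoy (𝟙 P)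
  have hv' : v ≫ (smallSubOverCocone κ P).ι.app S = 𝟙 P := hv
  have hli : ∀ x : P.left, (v.left x).1 = x := by
    intro x
    exact types_congr_hom (congrArg CommaMorphism.left hv') x
  have hinj : Function.Injective v.left := fun a b hab => by
    rw [← hli a, ← hli b, hab]
  exact (Cardinal.mk_le_of_injective hinj).trans_lt S.2

/-- A `κ`-presentable type has cardinality `< κ`. -/
theorem card_lt_of_presentable (hκr : κ.IsRegular) (hκ : Cardinal.aleph0 < κ)
    (T : Type u) (hT : IsCardPresentable κ T) : Cardinal.mk T < κ := by
  have hJ : IsCardFiltered (SmallSub κ T) κ := smallSub_isCardFiltered hκr T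
  have := hT (SmallSub κ T) hJ
  obtain ⟨hcoy⟩ := PreservesColimit.preserves
    (F := coyoneda.obj (op T)) (smallSubIsColimit hκ T)
  obtain ⟨S, v, hv⟩ := Types.jointly_surjective_of_isColimit hcoy (𝟙 T)
  have hv' : (v ≫ (smallSubCocone κ T).ι.app S) = 𝟙 T := hv
  have hinj : Function.Injective (ConcreteCategory.hom (v : T ⟶ S.1)) := fun a b hab => by
    have := types_congr_hom hv'
    simp only [types_comp_apply, types_id_apply] at this
    exact (this a).symm.trans ((congrArg (ConcreteCategory.hom ((smallSubCocone κ T).ι.app S)) hab).trans (this b))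
  exact (Cardinal.mk_le_of_injective hinj).trans_lt S.2

/-- The underlying type of a binary product in `Over B` is small if the factors are. -/
lemma prod_left_card_lt (hκ : Cardinal.aleph0 < κ) {B : Type u} (P Q : Over B)
    (hP : Cardinal.mk P.left < κ) (hQ : Cardinal.mk Q.left < κ) :
    Cardinal.mk (P ⨯ Q : Over B).left < κ := by
  have hinj : Function.Injective
      (fun a : (P ⨯ Q : Over B).left =>
        ((prod.fst : (P ⨯ Q : Over B) ⟶ P).left a,
         (prod.snd : (P ⨯ Q : Over B) ⟶ Q).left a)) := by
    intro a b h
    simp only [Prod.mk.injEq] at h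
    obtain ⟨h1, h2⟩ := h
    have hhom : (P ⨯ Q : Over B).hom a = (P ⨯ Q : Over B).hom b := by
      have hw := types_congr_hom (Over.w (prod.fst : (P ⨯ Q : Over B) ⟶ P))
      simp only [Functor.const_obj_obj, types_comp_apply] at hw
      rw [← hw a, ← hw b, h1]
    let E : Over B := Over.mk (TypeCat.ofHom fun _ : PUnit.{u + 1} => (P ⨯ Q : Over B).hom a)
    let f : E ⟶ P ⨯ Q := Over.homMk (TypeCat.ofHom fun _ => a) rfl
    let g : E ⟶ P ⨯ Q := Over.homMk (TypeCat.ofHom fun _ => b) (ConcreteCategory.hom_ext _ _ fun _ => hhom.symm)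
    have hfg : f = g := by
      apply Limits.prod.hom_ext
      · apply Over.OverMorphism.ext
        ext z
        exact h1
      · apply Over.OverMorphism.ext
        ext z
        exact h2
    exact types_congr_hom (congrArg CommaMorphism.left hfg) PUnit.unit
  have hle := Cardinal.mk_le_of_injective hinj
  refine hle.trans_lt ?_
  have hprod : Cardinal.mk (P.left × Q.left) = Cardinal.mk P.left * Cardinal.mk Q.left := by
    rw [Cardinal.mk_prod]; simp
  rw [hprod]
  exact Cardinal.mul_lt_of_lt hκ.le hP hQ

end Stmt14Aux

/-- For an uncountable regular cardinal `κ` and a `κ`-presentable type `B`, the terminal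
object `id : B → B` of `Over B` is `κ`-presentable, and the binary product (fiber product
over `B`) of two `κ`-presentable objects of `Over B` is `κ`-presentable. -/
theorem stmt14 (κ : Cardinal.{u}) (hκ : κ.IsRegular) (hκ' : Cardinal.aleph0 < κ)
    (B : Type u) (hB : IsCardPresentable κ B) :
    IsCardPresentable κ (Over.mk (𝟙 B)) ∧
      ∀ P Q : Over B, IsCardPresentable κ P → IsCardPresentable κ Q →
        IsCardPresentable κ (P ⨯ Q) := by
  have hBcard : Cardinal.mk B < κ := Stmt14Aux.card_lt_of_presentable hκ hκ' B hB
  constructor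
  · exact Stmt14Aux.over_presentable_of_card_lt hκ' (Over.mk (𝟙 B)) hBcard
  · intro P Q hP hQ
    have hPc : Cardinal.mk P.left < κ := Stmt14Aux.card_lt_of_over_presentable hκ hκ' P hP
    have hQc : Cardinal.mk Q.left < κ := Stmt14Aux.card_lt_of_over_presentable hκ hκ' Q hQ
    exact Stmt14Aux.over_presentable_of_card_lt hκ' (P ⨯ Q)
      (Stmt14Aux.prod_left_card_lt hκ' P Q hPc hQc)
end
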